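/- Equivalence of the dual filter and batch smoothing (methods equivalence): under the stochastic model, assume Σ_{ZZ} := Cov(Z_{0:T-1}) ∈ ℝ^{Tm×Tm} is invertible, and let 𝒲 := Cov(X_T, Z_{0:T-1}) Σ_{ZZ}^{-1} ∈ ℝ^{d×Tm} with blocks 𝒲_t ∈ ℝ^{d×m} for 0 ≤ t ≤ T-1. For f ∈ ℝ^d, define the control û ∈ 𝒰 by û_t := − 𝒲_t^⊤ f. Then û is a global minimizer of the dual cost J_T(·; f) over 𝒰, and the corresponding estimator S_T = y_0^⊤ μ_0 − Σ_{t=0}^{T-1} û_t^⊤ Z_t (with y the dual-state solution for (û, f)) equals the affine MMSE prediction f^⊤ ( E[X_T] + 𝒲 (Z_{0:T-1} − E[Z_{0:T-1}]) ) almost surely. -/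

import Mathlib

open Matrix Finset MeasureTheory ProbabilityTheory

/-- The backward difference equation (dual control system): `y_T = f` and
`y_t = ∑_{s=1}^{T-t} A_{t+s,s}ᵀ y_{t+s} + C_tᵀ u_t` for every `0 ≤ t ≤ T-1`. -/
def IsDualSol (T d m : ℕ) (A : ℕ → ℕ → Matrix (Fin d) (Fin d) ℝ)
    (C : ℕ → Matrix (Fin m) (Fin d) ℝ) (u : ℕ → Fin m → ℝ) (f : Fin d → ℝ)
    (y : ℕ → Fin d → ℝ) : Prop :=
  y T = f ∧
    ∀ t < T, y t =
      (∑ s ∈ Finset.Icc 1 (T - t), ((A (t + s) s)ᵀ).mulVec (y (t + s)))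
        + ((C t)ᵀ).mulVec (u t)

/-- The dual optimal control cost
`J_T(u; f) = ½ y_0ᵀ Σ0 y_0 + ∑_{t=1}^{T} ½ y_tᵀ Q_t y_t + ∑_{t=0}^{T-1} ½ u_tᵀ R_t u_t`,
expressed in terms of the dual-state solution `y` for `(u, f)`. -/
noncomputable def dualCost (T d m : ℕ) (Sig0 : Matrix (Fin d) (Fin d) ℝ)
    (Q : ℕ → Matrix (Fin d) (Fin d) ℝ) (R : ℕ → Matrix (Fin m) (Fin m) ℝ)
    (y : ℕ → Fin d → ℝ) (u : ℕ → Fin m → ℝ) : ℝ :=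
  (1 / 2) * (y 0 ⬝ᵥ Sig0.mulVec (y 0))
    + (∑ t ∈ Finset.Icc 1 T, (1 / 2) * (y t ⬝ᵥ (Q t).mulVec (y t)))
    + ∑ t ∈ Finset.range T, (1 / 2) * (u t ⬝ᵥ (R t).mulVec (u t))

/-- Values of the family of primitive random vectors `(X_0, B_1, …, B_T, W_0, …, W_{T-1})`. -/
def noiseType (d m : ℕ) {T : ℕ} : Fin (T + 1) ⊕ Fin T → Type :=
  Sum.elim (fun _ => Fin d → ℝ) (fun _ => Fin m → ℝ)

/-- The canonical measurable-space structure on each member of the family. -/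
def noiseMS (T d m : ℕ) : (i : Fin (T + 1) ⊕ Fin T) → MeasurableSpace (noiseType d m i)
  | Sum.inl _ => (inferInstance : MeasurableSpace (Fin d → ℝ))
  | Sum.inr _ => (inferInstance : MeasurableSpace (Fin m → ℝ))

/-- The family of primitive random vectors `(X_0, B_1, …, B_T, W_0, …, W_{T-1})`. -/
def noiseFamily (T d m : ℕ) {Ω : Type*} (X0 : Ω → Fin d → ℝ)
    (B : ℕ → Ω → Fin d → ℝ) (W : ℕ → Ω → Fin m → ℝ) :
    (i : Fin (T + 1) ⊕ Fin T) → Ω → noiseType d m i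
  | Sum.inl j => if j.val = 0 then X0 else B j.val
  | Sum.inr t => W t.val

/-- Entrywise mean of a random vector. -/
noncomputable def meanVec {Ω : Type*} [MeasurableSpace Ω] (μ : Measure Ω)
    {n : Type*} (V : Ω → n → ℝ) : n → ℝ :=
  fun i => ∫ ω, V ω i ∂μ

/-- Cross-covariance matrix `Cov(V, Z) = E[(V − E V)(Z − E Z)ᵀ]` of two random
vectors, computed entrywise. -/
noncomputable def covMat {Ω : Type*} [MeasurableSpace Ω] (μ : Measure Ω)
    {n k : Type*} (V : Ω → n → ℝ) (Z : Ω → k → ℝ) : Matrix n k ℝ :=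
  Matrix.of fun i j =>
    ∫ ω, (V ω i - meanVec μ V i) * (Z ω j - meanVec μ Z j) ∂μ


section Helpers
variable {Ω : Type*} [MeasurableSpace Ω] {μ : Measure Ω}

lemma L2mul {g1 g2 : Ω → ℝ} (h1 : MemLp g1 2 μ) (h2 : MemLp g2 2 μ) :
    Integrable (fun ω => g1 ω * g2 ω) μ := by
  rw [← memLp_one_iff_integrable]
  have := h2.smul (φ := g1) (r := 1) h1
  exact this

lemma memℒp_dot {n : ℕ} {V : Ω → Fin n → ℝ} (hV : ∀ i, MemLp (fun ω => V ω i) 2 μ)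
    (a : Fin n → ℝ) : MemLp (fun ω => a ⬝ᵥ V ω) 2 μ := by
  have : (fun ω => a ⬝ᵥ V ω) = fun ω => ∑ i, a i * V ω i := by
    funext ω; simp [dotProduct]
  rw [this]
  exact memLp_finset_sum _ (fun i (_ : i ∈ Finset.univ) => (hV i).const_mul (a i))

lemma measurable_dot {n : ℕ} (a : Fin n → ℝ) :
    Measurable (fun v : Fin n → ℝ => a ⬝ᵥ v) := by
  have : (fun v : Fin n → ℝ => a ⬝ᵥ v) = fun v => ∑ i, a i * v i := by
    funext v; simp [dotProduct]
  rw [this]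
  exact Finset.measurable_sum _ (fun i _ => by fun_prop)

lemma measurable_dot_center {n : ℕ} (a c : Fin n → ℝ) :
    Measurable (fun v : Fin n → ℝ => a ⬝ᵥ (fun i => v i - c i)) := by
  have : (fun v : Fin n → ℝ => a ⬝ᵥ (fun i => v i - c i)) = fun v => ∑ i, a i * (v i - c i) := by
    funext v; simp [dotProduct]
  rw [this]
  exact Finset.measurable_sum _
    (fun i _ => by fun_prop)

lemma integral_dot [IsProbabilityMeasure μ] {n : ℕ} {V : Ω → Fin n → ℝ}
    (hV : ∀ i, Integrable (fun ω => V ω i) μ) (a : Fin n → ℝ) :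
    ∫ ω, a ⬝ᵥ V ω ∂μ = a ⬝ᵥ (fun i => ∫ ω, V ω i ∂μ) := by
  have : (fun ω => a ⬝ᵥ V ω) = fun ω => ∑ i, a i * V ω i := by
    funext ω; simp [dotProduct]
  rw [this, integral_finset_sum _ (fun i _ => (hV i).const_mul (a i))]
  simp [dotProduct, integral_const_mul]

lemma indep_integral_mul {α β : Type*} {mα : MeasurableSpace α} {mβ : MeasurableSpace β}
    {U : Ω → α} {V : Ω → β} (h : IndepFun U V μ) {φ : α → ℝ} {ψ : β → ℝ}
    (hφ : Measurable φ) (hψ : Measurable ψ)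
    (h1 : Integrable (fun ω => φ (U ω)) μ) (h2 : Integrable (fun ω => ψ (V ω)) μ) :
    ∫ ω, φ (U ω) * ψ (V ω) ∂μ = (∫ ω, φ (U ω) ∂μ) * ∫ ω, ψ (V ω) ∂μ :=
  IndepFun.integral_mul_eq_mul_integral (h.comp hφ hψ) h1.aestronglyMeasurable h2.aestronglyMeasurable

lemma integral_sq_sum {ι : Type*} (s : Finset ι) (g : ι → Ω → ℝ)
    (hL2 : ∀ i ∈ s, MemLp (g i) 2 μ)
    (horth : ∀ i ∈ s, ∀ j ∈ s, i ≠ j → ∫ ω, g i ω * g j ω ∂μ = 0) :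
    ∫ ω, (∑ i ∈ s, g i ω) ^ 2 ∂μ = ∑ i ∈ s, ∫ ω, (g i ω) ^ 2 ∂μ := by
  have expand : (fun ω => (∑ i ∈ s, g i ω) ^ 2)
      = fun ω => ∑ i ∈ s, ∑ j ∈ s, g i ω * g j ω := by
    funext ω; rw [sq, Finset.sum_mul_sum]
  rw [expand, integral_finset_sum _ (fun i hi => integrable_finset_sum _
    (fun j hj => L2mul (hL2 i hi) (hL2 j hj)))]
  apply Finset.sum_congr rfl
  intro i hi
  rw [integral_finset_sum _ (fun j hj => L2mul (hL2 i hi) (hL2 j hj))]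
  rw [Finset.sum_eq_single_of_mem i hi]
  · simp [sq]
  · intro j hj hji
    exact horth i hi j hj (Ne.symm hji)

lemma integral_dot_mul_dot [IsProbabilityMeasure μ] {n : ℕ} {V : Ω → Fin n → ℝ}
    (hL2 : ∀ i, MemLp (fun ω => V ω i) 2 μ)
    (M : Matrix (Fin n) (Fin n) ℝ) (hM : ∀ i j, ∫ ω, V ω i * V ω j ∂μ = M i j)
    (a b : Fin n → ℝ) :
    ∫ ω, (a ⬝ᵥ V ω) * (b ⬝ᵥ V ω) ∂μ = a ⬝ᵥ M.mulVec b := by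
  have expand : (fun ω => (a ⬝ᵥ V ω) * (b ⬝ᵥ V ω))
      = fun ω => ∑ i, ∑ j, a i * b j * (V ω i * V ω j) := by
    funext ω
    simp only [dotProduct, Finset.sum_mul_sum]
    apply Finset.sum_congr rfl; intro i _
    apply Finset.sum_congr rfl; intro j _
    ring
  rw [expand, integral_finset_sum _ (fun i _ => integrable_finset_sum _
    (fun j _ => ((L2mul (hL2 i) (hL2 j)).const_mul _)))]
  have : ∀ i, ∫ ω, ∑ j, a i * b j * (V ω i * V ω j) ∂μ
      = ∑ j, a i * b j * M i j := by
    intro i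
    rw [integral_finset_sum _ (fun j _ => ((L2mul (hL2 i) (hL2 j)).const_mul _))]
    exact Finset.sum_congr rfl fun j _ => by rw [integral_const_mul, hM]
  simp only [this]
  simp only [dotProduct, mulVec, Finset.mul_sum]
  apply Finset.sum_congr rfl; intro i _
  apply Finset.sum_congr rfl; intro j _
  ring

end Helpers

lemma sum_swap_tri (T : ℕ) (g : ℕ → ℕ → ℝ) :
    ∑ t ∈ Icc 1 T, ∑ s ∈ Icc 1 t, g t s
      = ∑ r ∈ range T, ∑ s ∈ Icc 1 (T - r), g (r + s) s := by
  rw [Finset.sum_sigma', Finset.sum_sigma']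
  apply Finset.sum_nbij' (fun p => (⟨p.1 - p.2, p.2⟩ : Σ _ : ℕ, ℕ))
    (fun p => (⟨p.1 + p.2, p.2⟩ : Σ _ : ℕ, ℕ))
  · rintro ⟨t, s⟩ h
    simp only [Finset.mem_sigma, mem_Icc, mem_range] at h ⊢
    omega
  · rintro ⟨r, s⟩ h
    simp only [Finset.mem_sigma, mem_Icc, mem_range] at h ⊢
    omega
  · rintro ⟨t, s⟩ h
    simp only [Finset.mem_sigma, mem_Icc] at h
    show (⟨t - s + s, s⟩ : Σ _ : ℕ, ℕ) = ⟨t, s⟩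
    have : t - s + s = t := by omega
    rw [this]
  · rintro ⟨r, s⟩ h
    show (⟨r + s - s, s⟩ : Σ _ : ℕ, ℕ) = ⟨r, s⟩
    have : r + s - s = r := by omega
    rw [this]
  · rintro ⟨t, s⟩ h
    simp only [Finset.mem_sigma, mem_Icc] at h
    show g t s = g (t - s + s) s
    have : t - s + s = t := by omega
    rw [this]

lemma dotProduct_finset_sum {n : Type*} [Fintype n] {ι : Type*} (v : n → ℝ)
    (s : Finset ι) (w : ι → n → ℝ) :
    v ⬝ᵥ (∑ i ∈ s, w i) = ∑ i ∈ s, v ⬝ᵥ w i := by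
  simp only [dotProduct, Finset.sum_apply, Finset.mul_sum]
  exact Finset.sum_comm

lemma finset_sum_dotProduct {n : Type*} [Fintype n] {ι : Type*} (v : n → ℝ)
    (s : Finset ι) (w : ι → n → ℝ) :
    (∑ i ∈ s, w i) ⬝ᵥ v = ∑ i ∈ s, w i ⬝ᵥ v := by
  simp only [dotProduct, Finset.sum_apply, Finset.sum_mul]
  exact Finset.sum_comm

lemma adjoint_identity (T d m : ℕ) (A : ℕ → ℕ → Matrix (Fin d) (Fin d) ℝ)
    (C : ℕ → Matrix (Fin m) (Fin d) ℝ) (u : ℕ → Fin m → ℝ) (f : Fin d → ℝ)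
    (y : ℕ → Fin d → ℝ) (hy : IsDualSol T d m A C u f y)
    (x b : ℕ → Fin d → ℝ)
    (hx : ∀ t, 1 ≤ t → t ≤ T →
      x t = (∑ s ∈ Icc 1 t, (A t s).mulVec (x (t - s))) + b t) :
    f ⬝ᵥ x T = y 0 ⬝ᵥ x 0 + (∑ t ∈ Icc 1 T, y t ⬝ᵥ b t)
      - ∑ t ∈ range T, u t ⬝ᵥ (C t).mulVec (x t) := by
  have tel : (∑ t ∈ Icc 1 T, y t ⬝ᵥ x t) - (∑ t ∈ range T, y t ⬝ᵥ x t)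
      = y T ⬝ᵥ x T - y 0 ⬝ᵥ x 0 := by
    have h1 : ∑ t ∈ Icc 1 T, y t ⬝ᵥ x t = ∑ i ∈ range T, y (i + 1) ⬝ᵥ x (i + 1) := by
      rw [← Finset.Ico_add_one_right_eq_Icc, Finset.sum_Ico_eq_sum_range]
      simp [add_comm]
    rw [h1, ← Finset.sum_sub_distrib, Finset.sum_range_sub (fun i => y i ⬝ᵥ x i)]
  have E1 : ∑ t ∈ Icc 1 T, y t ⬝ᵥ x t
      = (∑ t ∈ Icc 1 T, ∑ s ∈ Icc 1 t, (y t) ᵥ* (A t s) ⬝ᵥ x (t - s))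
        + ∑ t ∈ Icc 1 T, y t ⬝ᵥ b t := by
    rw [← Finset.sum_add_distrib]
    apply Finset.sum_congr rfl
    intro t ht
    rw [mem_Icc] at ht
    rw [hx t ht.1 ht.2, dotProduct_add, dotProduct_finset_sum]
    congr 1
    apply Finset.sum_congr rfl
    intro s _
    rw [dotProduct_mulVec]
  have E2 : ∑ t ∈ range T, y t ⬝ᵥ x t
      = (∑ t ∈ range T, ∑ s ∈ Icc 1 (T - t), (y (t + s)) ᵥ* (A (t + s) s) ⬝ᵥ x t)
        + ∑ t ∈ range T, u t ⬝ᵥ (C t).mulVec (x t) := by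
    rw [← Finset.sum_add_distrib]
    apply Finset.sum_congr rfl
    intro t ht
    rw [mem_range] at ht
    rw [hy.2 t ht, add_dotProduct, finset_sum_dotProduct]
    congr 1
    · apply Finset.sum_congr rfl
      intro s _
      rw [mulVec_transpose]
    · rw [mulVec_transpose, ← dotProduct_mulVec]
  rw [E1, E2, sum_swap_tri T (fun t s => (y t) ᵥ* (A t s) ⬝ᵥ x (t - s))] at tel
  have hsimp : ∀ r s : ℕ, r + s - s = r := fun r s => by omega
  simp only [hsimp] at tel
  rw [hy.1] at tel
  linarith [tel]
/-- shift lemma -/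
lemma sum_shift {α : Type*} [AddCommMonoid α] (T : ℕ) (F : ℕ → α) :
    ∑ t ∈ Finset.Icc 1 T, F t = ∑ t ∈ Finset.range T, F (t + 1) := by
  rw [← Finset.Ico_add_one_right_eq_Icc, Finset.sum_Ico_eq_sum_range]
  simp [add_comm]

/-- The residual random variable attached to a control/dual-state pair. -/
noncomputable def Gfun (T d m : ℕ) {Ω : Type*} (X0 : Ω → Fin d → ℝ)
    (B : ℕ → Ω → Fin d → ℝ) (W : ℕ → Ω → Fin m → ℝ) (μ0 : Fin d → ℝ)
    (u : ℕ → Fin m → ℝ) (y' : ℕ → Fin d → ℝ) (ω : Ω) : ℝ :=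
  (y' 0 ⬝ᵥ (fun i => X0 ω i - μ0 i)) + (∑ t ∈ Finset.Icc 1 T, y' t ⬝ᵥ B t ω)
    + ∑ t ∈ Finset.range T, u t ⬝ᵥ W t ω

/-- The summands of `Gfun` indexed by the primitive random vectors. -/
noncomputable def gterm (T d m : ℕ) {Ω : Type*} (X0 : Ω → Fin d → ℝ)
    (B : ℕ → Ω → Fin d → ℝ) (W : ℕ → Ω → Fin m → ℝ) (μ0 : Fin d → ℝ)
    (u : ℕ → Fin m → ℝ) (y' : ℕ → Fin d → ℝ) :
    (Fin (T + 1) ⊕ Fin T) → Ω → ℝ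
  | Sum.inl j => fun ω =>
      if j.val = 0 then y' 0 ⬝ᵥ (fun i => X0 ω i - μ0 i) else y' j.val ⬝ᵥ B j.val ω
  | Sum.inr t => fun ω => u t.val ⬝ᵥ W t.val ω

lemma Gfun_eq_sum_gterm (T d m : ℕ) {Ω : Type*} (X0 : Ω → Fin d → ℝ)
    (B : ℕ → Ω → Fin d → ℝ) (W : ℕ → Ω → Fin m → ℝ) (μ0 : Fin d → ℝ)
    (u : ℕ → Fin m → ℝ) (y' : ℕ → Fin d → ℝ) (ω : Ω) :
    Gfun T d m X0 B W μ0 u y' ω = ∑ i, gterm T d m X0 B W μ0 u y' i ω := by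
  rw [Fintype.sum_sum_type, Fin.sum_univ_succ]
  simp only [gterm, Fin.val_zero, if_true, Fin.val_succ, Nat.succ_ne_zero, if_false,
    Fin.isValue]
  rw [Gfun, sum_shift T (fun t => y' t ⬝ᵥ B t ω)]
  rw [Fin.sum_univ_eq_sum_range (fun t => y' (t + 1) ⬝ᵥ B (t + 1) ω) T,
    Fin.sum_univ_eq_sum_range (fun t => u t ⬝ᵥ W t ω) T]
section Moment
variable {Ω : Type*} [MeasurableSpace Ω] {μ : Measure Ω}

lemma gterm_memℒp [IsProbabilityMeasure μ] (T d m : ℕ)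
    (X0 : Ω → Fin d → ℝ) (B : ℕ → Ω → Fin d → ℝ) (W : ℕ → Ω → Fin m → ℝ)
    (μ0 : Fin d → ℝ) (u : ℕ → Fin m → ℝ) (y' : ℕ → Fin d → ℝ)
    (hX0L2 : ∀ i, MemLp (fun ω => X0 ω i) 2 μ)
    (hBL2 : ∀ t, 1 ≤ t → t ≤ T → ∀ i, MemLp (fun ω => B t ω i) 2 μ)
    (hWL2 : ∀ t < T, ∀ j, MemLp (fun ω => W t ω j) 2 μ)
    (i : Fin (T + 1) ⊕ Fin T) :
    MemLp (gterm T d m X0 B W μ0 u y' i) 2 μ := by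
  rcases i with j | t
  · by_cases hj : j.val = 0
    · have : gterm T d m X0 B W μ0 u y' (Sum.inl j)
          = fun ω => y' 0 ⬝ᵥ (fun i => X0 ω i - μ0 i) := by
        funext ω; simp [gterm, hj]
      rw [this]
      exact memℒp_dot (fun i => (hX0L2 i).sub (memLp_const _)) _
    · have : gterm T d m X0 B W μ0 u y' (Sum.inl j)
          = fun ω => y' j.val ⬝ᵥ B j.val ω := by
        funext ω; simp [gterm, hj]
      rw [this]
      exact memℒp_dot (fun i => hBL2 j.val (by omega) (by omega) i) _
  · have : gterm T d m X0 B W μ0 u y' (Sum.inr t)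
        = fun ω => u t.val ⬝ᵥ W t.val ω := by
      funext ω; simp [gterm]
    rw [this]
    exact memℒp_dot (fun i => hWL2 t.val t.isLt i) _

lemma gterm_mean_zero [IsProbabilityMeasure μ] (T d m : ℕ)
    (X0 : Ω → Fin d → ℝ) (B : ℕ → Ω → Fin d → ℝ) (W : ℕ → Ω → Fin m → ℝ)
    (μ0 : Fin d → ℝ) (u : ℕ → Fin m → ℝ) (y' : ℕ → Fin d → ℝ)
    (hX0L2 : ∀ i, MemLp (fun ω => X0 ω i) 2 μ)
    (hBL2 : ∀ t, 1 ≤ t → t ≤ T → ∀ i, MemLp (fun ω => B t ω i) 2 μ)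
    (hWL2 : ∀ t < T, ∀ j, MemLp (fun ω => W t ω j) 2 μ)
    (hX0mean : ∀ i, (∫ ω, X0 ω i ∂μ) = μ0 i)
    (hBmean : ∀ t, 1 ≤ t → t ≤ T → ∀ i, (∫ ω, B t ω i ∂μ) = 0)
    (hWmean : ∀ t < T, ∀ j, (∫ ω, W t ω j ∂μ) = 0)
    (i : Fin (T + 1) ⊕ Fin T) :
    ∫ ω, gterm T d m X0 B W μ0 u y' i ω ∂μ = 0 := by
  rcases i with j | t
  · by_cases hj : j.val = 0
    · have h1 : ∀ ω, gterm T d m X0 B W μ0 u y' (Sum.inl j) ω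
          = y' 0 ⬝ᵥ (fun i => X0 ω i - μ0 i) := by
        intro ω; simp [gterm, hj]
      simp only [h1]
      rw [integral_dot (V := fun ω i => X0 ω i - μ0 i)
        (fun i => by exact ((hX0L2 i).integrable one_le_two).sub (integrable_const _))]
      have : (fun i => ∫ ω, (X0 ω i - μ0 i) ∂μ) = (0 : Fin d → ℝ) := by
        funext i
        rw [integral_sub ((hX0L2 i).integrable one_le_two) (integrable_const _)]
        simp [hX0mean i]
      rw [this, dotProduct_zero]
    · have hBL2' : ∀ i, MemLp (fun ω => B j.val ω i) 2 μ :=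
        fun i => hBL2 j.val (by omega) (by omega) i
      have h1 : ∀ ω, gterm T d m X0 B W μ0 u y' (Sum.inl j) ω
          = y' j.val ⬝ᵥ B j.val ω := by
        intro ω; simp [gterm, hj]
      simp only [h1]
      rw [integral_dot (V := fun ω i => B j.val ω i)
        (fun i => (hBL2' i).integrable one_le_two)]
      have : (fun i => ∫ ω, B j.val ω i ∂μ) = (0 : Fin d → ℝ) := by
        funext i; simp [hBmean j.val (by omega) (by omega) i]
      rw [this, dotProduct_zero]
  · have h1 : ∀ ω, gterm T d m X0 B W μ0 u y' (Sum.inr t) ω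
        = u t.val ⬝ᵥ W t.val ω := by
      intro ω; simp [gterm]
    simp only [h1]
    rw [integral_dot (V := fun ω i => W t.val ω i)
      (fun i => (hWL2 t.val t.isLt i).integrable one_le_two)]
    have : (fun i => ∫ ω, W t.val ω i ∂μ) = (0 : Fin m → ℝ) := by
      funext i; simp [hWmean t.val t.isLt i]
    rw [this, dotProduct_zero]

lemma gterm_rep (T d m : ℕ)
    (X0 : Ω → Fin d → ℝ) (B : ℕ → Ω → Fin d → ℝ) (W : ℕ → Ω → Fin m → ℝ)
    (μ0 : Fin d → ℝ) (u : ℕ → Fin m → ℝ) (y' : ℕ → Fin d → ℝ)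
    (i : Fin (T + 1) ⊕ Fin T) :
    ∃ φ : noiseType d m i → ℝ, Measurable[noiseMS T d m i] φ ∧
      ∀ ω, gterm T d m X0 B W μ0 u y' i ω = φ (noiseFamily T d m X0 B W i ω) := by
  rcases i with j | t
  · by_cases hj : j.val = 0
    · exact ⟨fun v => y' 0 ⬝ᵥ (fun i => v i - μ0 i), measurable_dot_center _ _,
        fun ω => by simp [gterm, noiseFamily, hj]⟩
    · exact ⟨fun v => y' j.val ⬝ᵥ v, measurable_dot _,
        fun ω => by simp [gterm, noiseFamily, hj]⟩
  · exact ⟨fun v => u t.val ⬝ᵥ v, measurable_dot _,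
      fun ω => by simp [gterm, noiseFamily]⟩

lemma gterm_orth [IsProbabilityMeasure μ] (T d m : ℕ)
    (X0 : Ω → Fin d → ℝ) (B : ℕ → Ω → Fin d → ℝ) (W : ℕ → Ω → Fin m → ℝ)
    (μ0 : Fin d → ℝ) (u : ℕ → Fin m → ℝ) (y' : ℕ → Fin d → ℝ)
    (hindep : iIndepFun (m := noiseMS T d m) (noiseFamily T d m X0 B W) μ)
    (hX0L2 : ∀ i, MemLp (fun ω => X0 ω i) 2 μ)
    (hBL2 : ∀ t, 1 ≤ t → t ≤ T → ∀ i, MemLp (fun ω => B t ω i) 2 μ)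
    (hWL2 : ∀ t < T, ∀ j, MemLp (fun ω => W t ω j) 2 μ)
    (hX0mean : ∀ i, (∫ ω, X0 ω i ∂μ) = μ0 i)
    (hBmean : ∀ t, 1 ≤ t → t ≤ T → ∀ i, (∫ ω, B t ω i ∂μ) = 0)
    (hWmean : ∀ t < T, ∀ j, (∫ ω, W t ω j ∂μ) = 0)
    (i j : Fin (T + 1) ⊕ Fin T) (hij : i ≠ j) :
    ∫ ω, gterm T d m X0 B W μ0 u y' i ω * gterm T d m X0 B W μ0 u y' j ω ∂μ = 0 := by
  obtain ⟨φ, hφ, hφeq⟩ := gterm_rep T d m X0 B W μ0 u y' i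
  obtain ⟨ψ, hψ, hψeq⟩ := gterm_rep T d m X0 B W μ0 u y' j
  have hint1 : Integrable (fun ω => φ (noiseFamily T d m X0 B W i ω)) μ := by
    have := (gterm_memℒp T d m X0 B W μ0 u y' hX0L2 hBL2 hWL2 i).integrable one_le_two
    refine this.congr (Filter.Eventually.of_forall fun ω => (hφeq ω))
  have hint2 : Integrable (fun ω => ψ (noiseFamily T d m X0 B W j ω)) μ := by
    have := (gterm_memℒp T d m X0 B W μ0 u y' hX0L2 hBL2 hWL2 j).integrable one_le_two
    refine this.congr (Filter.Eventually.of_forall fun ω => (hψeq ω))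
  simp only [hφeq, hψeq]
  rw [indep_integral_mul (hindep.indepFun hij) hφ hψ hint1 hint2]
  have : ∫ ω, φ (noiseFamily T d m X0 B W i ω) ∂μ = 0 := by
    rw [show (fun ω => φ (noiseFamily T d m X0 B W i ω))
        = gterm T d m X0 B W μ0 u y' i from funext fun ω => (hφeq ω).symm]
    exact gterm_mean_zero T d m X0 B W μ0 u y' hX0L2 hBL2 hWL2 hX0mean hBmean hWmean i
  rw [← this]
  · rw [this, zero_mul]

lemma Gfun_moment [IsProbabilityMeasure μ] (T d m : ℕ)
    (X0 : Ω → Fin d → ℝ) (B : ℕ → Ω → Fin d → ℝ) (W : ℕ → Ω → Fin m → ℝ)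
    (μ0 : Fin d → ℝ) (Sig0 : Matrix (Fin d) (Fin d) ℝ)
    (Q : ℕ → Matrix (Fin d) (Fin d) ℝ) (R : ℕ → Matrix (Fin m) (Fin m) ℝ)
    (u : ℕ → Fin m → ℝ) (y' : ℕ → Fin d → ℝ)
    (hindep : iIndepFun (m := noiseMS T d m) (noiseFamily T d m X0 B W) μ)
    (hX0L2 : ∀ i, MemLp (fun ω => X0 ω i) 2 μ)
    (hBL2 : ∀ t, 1 ≤ t → t ≤ T → ∀ i, MemLp (fun ω => B t ω i) 2 μ)
    (hWL2 : ∀ t < T, ∀ j, MemLp (fun ω => W t ω j) 2 μ)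
    (hX0mean : ∀ i, (∫ ω, X0 ω i ∂μ) = μ0 i)
    (hBmean : ∀ t, 1 ≤ t → t ≤ T → ∀ i, (∫ ω, B t ω i ∂μ) = 0)
    (hWmean : ∀ t < T, ∀ j, (∫ ω, W t ω j ∂μ) = 0)
    (hX0cov : ∀ i i', (∫ ω, (X0 ω i - μ0 i) * (X0 ω i' - μ0 i') ∂μ) = Sig0 i i')
    (hBcov : ∀ t, 1 ≤ t → t ≤ T → ∀ i i', (∫ ω, B t ω i * B t ω i' ∂μ) = Q t i i')
    (hWcov : ∀ t < T, ∀ j j', (∫ ω, W t ω j * W t ω j' ∂μ) = R t j j') :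
    ∫ ω, (Gfun T d m X0 B W μ0 u y' ω) ^ 2 ∂μ
      = y' 0 ⬝ᵥ Sig0.mulVec (y' 0)
        + (∑ t ∈ Finset.Icc 1 T, y' t ⬝ᵥ (Q t).mulVec (y' t))
        + ∑ t ∈ Finset.range T, u t ⬝ᵥ (R t).mulVec (u t) := by
  have heq : (fun ω => (Gfun T d m X0 B W μ0 u y' ω) ^ 2)
      = fun ω => (∑ i, gterm T d m X0 B W μ0 u y' i ω) ^ 2 := by
    funext ω; rw [Gfun_eq_sum_gterm]
  rw [heq, integral_sq_sum Finset.univ _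
    (fun i _ => gterm_memℒp T d m X0 B W μ0 u y' hX0L2 hBL2 hWL2 i)
    (fun i _ j _ hij => gterm_orth T d m X0 B W μ0 u y' hindep hX0L2 hBL2 hWL2
      hX0mean hBmean hWmean i j hij)]
  rw [Fintype.sum_sum_type, Fin.sum_univ_succ]
  have d0 : ∫ ω, (gterm T d m X0 B W μ0 u y' (Sum.inl 0) ω) ^ 2 ∂μ
      = y' 0 ⬝ᵥ Sig0.mulVec (y' 0) := by
    have h1 : (fun ω => (gterm T d m X0 B W μ0 u y' (Sum.inl 0) ω) ^ 2)
        = fun ω => (y' 0 ⬝ᵥ (fun i => X0 ω i - μ0 i)) * (y' 0 ⬝ᵥ (fun i => X0 ω i - μ0 i)) := by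
      funext ω; simp [gterm, pow_two]
    rw [h1]
    exact integral_dot_mul_dot (V := fun ω i => X0 ω i - μ0 i)
      (fun i => (hX0L2 i).sub (memLp_const _)) Sig0 hX0cov (y' 0) (y' 0)
  have dB : ∀ jf : Fin T, ∫ ω, (gterm T d m X0 B W μ0 u y' (Sum.inl jf.succ) ω) ^ 2 ∂μ
      = y' (jf.val + 1) ⬝ᵥ (Q (jf.val + 1)).mulVec (y' (jf.val + 1)) := by
    intro jf
    have h1 : (fun ω => (gterm T d m X0 B W μ0 u y' (Sum.inl jf.succ) ω) ^ 2)
        = fun ω => (y' (jf.val + 1) ⬝ᵥ B (jf.val + 1) ω) * (y' (jf.val + 1) ⬝ᵥ B (jf.val + 1) ω) := by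
      funext ω; simp [gterm, pow_two]
    rw [h1]
    exact integral_dot_mul_dot (V := fun ω i => B (jf.val + 1) ω i)
      (fun i => hBL2 (jf.val + 1) (by omega) (by omega) i) (Q (jf.val + 1))
      (hBcov (jf.val + 1) (by omega) (by omega)) _ _
  have dW : ∀ t : Fin T, ∫ ω, (gterm T d m X0 B W μ0 u y' (Sum.inr t) ω) ^ 2 ∂μ
      = u t.val ⬝ᵥ (R t.val).mulVec (u t.val) := by
    intro t
    have h1 : (fun ω => (gterm T d m X0 B W μ0 u y' (Sum.inr t) ω) ^ 2)
        = fun ω => (u t.val ⬝ᵥ W t.val ω) * (u t.val ⬝ᵥ W t.val ω) := by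
      funext ω; simp [gterm, pow_two]
    rw [h1]
    exact integral_dot_mul_dot (V := fun ω i => W t.val ω i)
      (fun i => hWL2 t.val t.isLt i) (R t.val) (hWcov t.val t.isLt) _ _
  rw [d0]
  simp only [dB, dW]
  rw [sum_shift T (fun t => y' t ⬝ᵥ (Q t).mulVec (y' t)),
    Fin.sum_univ_eq_sum_range (fun t => y' (t + 1) ⬝ᵥ (Q (t + 1)).mulVec (y' (t + 1))) T,
    Fin.sum_univ_eq_sum_range (fun t => u t ⬝ᵥ (R t).mulVec (u t)) T]

end Moment

lemma sum_range_dot {T m' : ℕ} (w z : ℕ → Fin m' → ℝ) :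
    ∑ t ∈ Finset.range T, w t ⬝ᵥ z t
      = ∑ p : Fin T × Fin m', w p.1.val p.2 * z p.1.val p.2 := by
  rw [← Fin.sum_univ_eq_sum_range (fun t => w t ⬝ᵥ z t) T, Fintype.sum_prod_type]
  simp [dotProduct]

lemma centered_integral_mul {Ω : Type*} [MeasurableSpace Ω] {μ : Measure Ω}
    [IsProbabilityMeasure μ] {g1 g2 : Ω → ℝ}
    (h1 : MemLp g1 2 μ) (h2 : MemLp g2 2 μ) :
    ∫ ω, (g1 ω - ∫ ω', g1 ω' ∂μ) * (g2 ω - ∫ ω', g2 ω' ∂μ) ∂μ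
      = (∫ ω, g1 ω * g2 ω ∂μ) - (∫ ω, g1 ω ∂μ) * ∫ ω, g2 ω ∂μ := by
  have i1 : Integrable g1 μ := h1.integrable one_le_two
  have i2 : Integrable g2 μ := h2.integrable one_le_two
  have i12 : Integrable (fun ω => g1 ω * g2 ω) μ := L2mul h1 h2
  have expand : ∀ ω, (g1 ω - ∫ ω', g1 ω' ∂μ) * (g2 ω - ∫ ω', g2 ω' ∂μ)
      = g1 ω * g2 ω - (∫ ω', g1 ω' ∂μ) * g2 ω
          - ((∫ ω', g2 ω' ∂μ) * g1 ω - (∫ ω', g1 ω' ∂μ) * ∫ ω', g2 ω' ∂μ) := by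
    intro ω; ring
  simp only [expand]
  have j1 : Integrable (fun ω => g1 ω * g2 ω - (∫ ω', g1 ω' ∂μ) * g2 ω) μ := by
    exact i12.sub (i2.const_mul _)
  have j2 : Integrable
      (fun ω => (∫ ω', g2 ω' ∂μ) * g1 ω - (∫ ω', g1 ω' ∂μ) * ∫ ω', g2 ω' ∂μ) μ := by
    exact (i1.const_mul _).sub (integrable_const _)
  have j3 : Integrable (fun ω => (∫ ω', g1 ω' ∂μ) * g2 ω) μ := i2.const_mul _
  have j4 : Integrable (fun ω => (∫ ω', g2 ω' ∂μ) * g1 ω) μ := i1.const_mul _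
  rw [integral_sub j1 j2, integral_sub i12 j3, integral_sub j4 (integrable_const _)]
  simp only [MeasureTheory.integral_const_mul, integral_const, probReal_univ,
    ENNReal.toReal_one, one_smul, smul_eq_mul]
  ring
/-- Equivalence of the dual filter and batch smoothing: under the stochastic model,
assume `Σ_ZZ := Cov(Z_{0:T-1})` is invertible, and let
`𝒲 := Cov(X_T, Z_{0:T-1}) Σ_ZZ⁻¹` with blocks `𝒲_t`. For `f ∈ ℝ^d`, define the
control `û` by `û_t := − 𝒲_tᵀ f`. Then `û` is a global minimizer of the dual cost
`J_T(·; f)` over `𝒰`, and the corresponding estimator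
`S_T = y_0ᵀ μ0 − ∑_{t=0}^{T-1} û_tᵀ Z_t` (with `y` the dual-state solution for
`(û, f)`) equals the affine MMSE prediction
`fᵀ ( E[X_T] + 𝒲 (Z_{0:T-1} − E[Z_{0:T-1}]) )` almost surely. -/
theorem dual_filter_equals_batch_smoothing
    (T d m : ℕ) (hT : 1 ≤ T) (hd : 1 ≤ d) (hm : 1 ≤ m)
    {Ω : Type*} [MeasurableSpace Ω] (μ : Measure Ω) [IsProbabilityMeasure μ]
    (A : ℕ → ℕ → Matrix (Fin d) (Fin d) ℝ)
    (C : ℕ → Matrix (Fin m) (Fin d) ℝ)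
    (X B : ℕ → Ω → Fin d → ℝ) (Z W : ℕ → Ω → Fin m → ℝ)
    (μ0 : Fin d → ℝ) (Sig0 : Matrix (Fin d) (Fin d) ℝ)
    (Q : ℕ → Matrix (Fin d) (Fin d) ℝ) (R : ℕ → Matrix (Fin m) (Fin m) ℝ)
    -- measurability and mutual independence of `X_0, B_1, …, B_T, W_0, …, W_{T-1}`
    (hmeas : ∀ i, @Measurable Ω (noiseType d m i) _ (noiseMS T d m i)
      (noiseFamily T d m (X 0) B W i))
    (hindep : iIndepFun (m := noiseMS T d m) (noiseFamily T d m (X 0) B W) μ)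
    -- square integrability (componentwise)
    (hX0L2 : ∀ i, MemLp (fun ω => X 0 ω i) 2 μ)
    (hBL2 : ∀ t, 1 ≤ t → t ≤ T → ∀ i, MemLp (fun ω => B t ω i) 2 μ)
    (hWL2 : ∀ t < T, ∀ j, MemLp (fun ω => W t ω j) 2 μ)
    -- first moments
    (hX0mean : ∀ i, (∫ ω, X 0 ω i ∂μ) = μ0 i)
    (hBmean : ∀ t, 1 ≤ t → t ≤ T → ∀ i, (∫ ω, B t ω i ∂μ) = 0)
    (hWmean : ∀ t < T, ∀ j, (∫ ω, W t ω j ∂μ) = 0)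
    -- covariances
    (hX0cov : ∀ i i', (∫ ω, (X 0 ω i - μ0 i) * (X 0 ω i' - μ0 i') ∂μ) = Sig0 i i')
    (hBcov : ∀ t, 1 ≤ t → t ≤ T → ∀ i i',
      (∫ ω, B t ω i * B t ω i' ∂μ) = Q t i i')
    (hWcov : ∀ t < T, ∀ j j', (∫ ω, W t ω j * W t ω j' ∂μ) = R t j j')
    -- the hidden-state recursion and the observation model
    (hX : ∀ t, 1 ≤ t → t ≤ T → ∀ ω,
      X t ω = (∑ s ∈ Finset.Icc 1 t, (A t s).mulVec (X (t - s) ω)) + B t ω)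
    (hZ : ∀ t < T, ∀ ω, Z t ω = (C t).mulVec (X t ω) + W t ω)
    -- the stacked observation vector `Z_{0:T-1}`
    (Zvec : Ω → Fin T × Fin m → ℝ)
    (hZvec : ∀ ω p, Zvec ω p = Z p.1.val ω p.2)
    -- invertibility of `Σ_ZZ` and the batch-smoothing weight matrix `𝒲`
    (hinv : IsUnit (covMat μ Zvec Zvec))
    (Wmat : Matrix (Fin d) (Fin T × Fin m) ℝ)
    (hWmat : Wmat = covMat μ (X T) Zvec * (covMat μ Zvec Zvec)⁻¹)
    -- the control `û_t := − 𝒲_tᵀ f` and its dual-state solution `y`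
    (f : Fin d → ℝ) (uhat : ℕ → Fin m → ℝ)
    (huhat : ∀ t (h : t < T), uhat t = fun j => -((Wmatᵀ).mulVec f (⟨t, h⟩, j)))
    (y : ℕ → Fin d → ℝ)
    (hy : IsDualSol T d m A C uhat f y) :
    (∀ (u : ℕ → Fin m → ℝ) (y' : ℕ → Fin d → ℝ),
        IsDualSol T d m A C u f y' →
        dualCost T d m Sig0 Q R y uhat ≤ dualCost T d m Sig0 Q R y' u)
    ∧ (∀ᵐ ω ∂μ,
        y 0 ⬝ᵥ μ0 - (∑ t ∈ Finset.range T, uhat t ⬝ᵥ Z t ω)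
          = f ⬝ᵥ (meanVec μ (X T)
              + Wmat.mulVec (fun p => Zvec ω p - meanVec μ Zvec p))) := by
  classical
  -- Square integrability of the states
  have hXL2 : ∀ t, t ≤ T → ∀ i, MemLp (fun ω => X t ω i) 2 μ := by
    intro t
    induction t using Nat.strong_induction_on with
    | _ t ih =>
      intro ht i
      rcases Nat.eq_zero_or_pos t with h0 | h1
      · subst h0; exact hX0L2 i
      · have hrw : (fun ω => X t ω i) = fun ω =>
            (∑ s ∈ Finset.Icc 1 t, ∑ j, A t s i j * X (t - s) ω j) + B t ω i := by
          funext ω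
          rw [hX t h1 ht ω]
          simp [mulVec, dotProduct, Finset.sum_apply]
        rw [hrw]
        apply MemLp.add
        · apply memLp_finset_sum
          intro s hs
          apply memLp_finset_sum
          intro j _
          rw [Finset.mem_Icc] at hs
          exact (ih (t - s) (by omega) (by omega) j).const_mul _
        · exact hBL2 t h1 ht i
  have hZL2 : ∀ t, t < T → ∀ j, MemLp (fun ω => Z t ω j) 2 μ := by
    intro t ht j
    have hrw : (fun ω => Z t ω j) = fun ω => (∑ k, C t j k * X t ω k) + W t ω j := by
      funext ω
      rw [hZ t ht ω]
      simp [mulVec, dotProduct]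
    rw [hrw]
    exact MemLp.add
      (memLp_finset_sum _ (fun k _ => (hXL2 t (le_of_lt ht) k).const_mul _))
      (hWL2 t ht j)
  have hZvecL2 : ∀ p, MemLp (fun ω => Zvec ω p) 2 μ := by
    intro p
    have : (fun ω => Zvec ω p) = fun ω => Z p.1.val ω p.2 := funext fun ω => hZvec ω p
    rw [this]
    exact hZL2 _ p.1.isLt p.2
  have hZvecInt : ∀ p, Integrable (fun ω => Zvec ω p) μ :=
    fun p => (hZvecL2 p).integrable one_le_two
  -- the residual of a control/dual-state pair, and its properties
  set G : (ℕ → Fin m → ℝ) → (ℕ → Fin d → ℝ) → Ω → ℝ :=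
    fun u' y'' => Gfun T d m (X 0) B W μ0 u' y'' with hGdef
  have hmom : ∀ (u' : ℕ → Fin m → ℝ) (y'' : ℕ → Fin d → ℝ),
      ∫ ω, (G u' y'' ω) ^ 2 ∂μ
        = y'' 0 ⬝ᵥ Sig0.mulVec (y'' 0)
          + (∑ t ∈ Finset.Icc 1 T, y'' t ⬝ᵥ (Q t).mulVec (y'' t))
          + ∑ t ∈ Finset.range T, u' t ⬝ᵥ (R t).mulVec (u' t) :=
    fun u' y'' => Gfun_moment T d m (X 0) B W μ0 Sig0 Q R u' y'' hindep hX0L2 hBL2 hWL2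
      hX0mean hBmean hWmean hX0cov hBcov hWcov
  have hGL2 : ∀ u' y'', MemLp (G u' y'') 2 μ := by
    intro u' y''
    have : G u' y'' = fun ω => ∑ i, gterm T d m (X 0) B W μ0 u' y'' i ω :=
      funext fun ω => Gfun_eq_sum_gterm T d m (X 0) B W μ0 u' y'' ω
    rw [this]
    exact memLp_finset_sum _
      (fun i _ => gterm_memℒp T d m (X 0) B W μ0 u' y'' hX0L2 hBL2 hWL2 i)
  have hGmean : ∀ u' y'', ∫ ω, G u' y'' ω ∂μ = 0 := by
    intro u' y''
    have h1 : G u' y'' = fun ω => ∑ i, gterm T d m (X 0) B W μ0 u' y'' i ω :=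
      funext fun ω => Gfun_eq_sum_gterm T d m (X 0) B W μ0 u' y'' ω
    rw [h1, integral_finset_sum _ (fun i _ =>
      (gterm_memℒp T d m (X 0) B W μ0 u' y'' hX0L2 hBL2 hWL2 i).integrable one_le_two)]
    exact Finset.sum_eq_zero fun i _ =>
      gterm_mean_zero T d m (X 0) B W μ0 u' y'' hX0L2 hBL2 hWL2 hX0mean hBmean hWmean i
  -- the residual in terms of the observations
  have hGeq : ∀ (u' : ℕ → Fin m → ℝ) (y'' : ℕ → Fin d → ℝ),
      IsDualSol T d m A C u' f y'' → ∀ ω,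
      G u' y'' ω = f ⬝ᵥ X T ω - y'' 0 ⬝ᵥ μ0 + ∑ t ∈ Finset.range T, u' t ⬝ᵥ Z t ω := by
    intro u' y'' hsol ω
    have adj := adjoint_identity T d m A C u' f y'' hsol (fun t => X t ω) (fun t => B t ω)
      (fun t h1 h2 => hX t h1 h2 ω)
    have hZ' : ∀ t ∈ Finset.range T,
        u' t ⬝ᵥ Z t ω = u' t ⬝ᵥ (C t).mulVec (X t ω) + u' t ⬝ᵥ W t ω := by
      intro t ht
      rw [hZ t (Finset.mem_range.mp ht) ω, dotProduct_add]
    rw [Finset.sum_congr rfl hZ', Finset.sum_add_distrib, adj]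
    have hsub : y'' 0 ⬝ᵥ (fun i => X 0 ω i - μ0 i) = y'' 0 ⬝ᵥ X 0 ω - y'' 0 ⬝ᵥ μ0 := by
      exact dotProduct_sub (y'' 0) (X 0 ω) μ0
    simp only [hGdef, Gfun]
    rw [hsub]
    ring
  -- the weight vector
  set vhat : Fin T × Fin m → ℝ := Wmatᵀ.mulVec f with hvhatdef
  have huhat_dot : ∀ z : ℕ → Fin m → ℝ,
      ∑ t ∈ Finset.range T, uhat t ⬝ᵥ z t = -∑ p : Fin T × Fin m, vhat p * z p.1.val p.2 := by
    intro z
    rw [sum_range_dot (T := T) uhat z, ← Finset.sum_neg_distrib]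
    apply Finset.sum_congr rfl
    rintro ⟨t, j⟩ _
    rw [huhat t.val t.isLt]
    simp [hvhatdef]
  have hvhat_dot : ∀ z : Fin T × Fin m → ℝ,
      (∑ p : Fin T × Fin m, vhat p * z p) = f ⬝ᵥ Wmat.mulVec z := by
    intro z
    rw [dotProduct_mulVec, ← mulVec_transpose]
    simp [dotProduct, hvhatdef]
  -- mean computations
  have hXTint : ∀ i, Integrable (fun ω => X T ω i) μ :=
    fun i => (hXL2 T le_rfl i).integrable one_le_two
  have hfXT_mean : ∫ ω, f ⬝ᵥ X T ω ∂μ = f ⬝ᵥ meanVec μ (X T) := by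
    rw [integral_dot (V := fun ω i => X T ω i) hXTint]
    rfl
  have hmeanZ : ∀ p : Fin T × Fin m, (∫ ω, Z p.1.val ω p.2 ∂μ) = meanVec μ Zvec p := by
    intro p
    exact (integral_congr_ae (Filter.Eventually.of_forall
      (fun ω => (hZvec ω p)))).symm
  have hZdotint : ∀ (w : ℕ → Fin m → ℝ), ∀ t ∈ Finset.range T,
      Integrable (fun ω => w t ⬝ᵥ Z t ω) μ := by
    intro w t ht
    exact (memℒp_dot (fun j => hZL2 t (Finset.mem_range.mp ht) j) (w t)).integrable one_le_two
  have hintsumZ : ∀ (w : ℕ → Fin m → ℝ),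
      ∫ ω, (∑ t ∈ Finset.range T, w t ⬝ᵥ Z t ω) ∂μ
        = ∑ t ∈ Finset.range T, w t ⬝ᵥ (fun j => ∫ ω, Z t ω j ∂μ) := by
    intro w
    rw [integral_finset_sum _ (hZdotint w)]
    exact Finset.sum_congr rfl fun t ht => integral_dot (V := fun ω j => Z t ω j)
      (fun j => (hZL2 t (Finset.mem_range.mp ht) j).integrable one_le_two) (w t)
  have hmean_eq : y 0 ⬝ᵥ μ0
      = f ⬝ᵥ meanVec μ (X T) - f ⬝ᵥ Wmat.mulVec (meanVec μ Zvec) := by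
    have h0 := hGmean uhat y
    have h1 : G uhat y = fun ω => (f ⬝ᵥ X T ω - y 0 ⬝ᵥ μ0)
        + ∑ t ∈ Finset.range T, uhat t ⬝ᵥ Z t ω := funext fun ω => hGeq uhat y hy ω
    have ic : Integrable (fun ω => f ⬝ᵥ X T ω) μ :=
      (memℒp_dot (hXL2 T le_rfl) f).integrable one_le_two
    have ia : Integrable (fun ω => f ⬝ᵥ X T ω - y 0 ⬝ᵥ μ0) μ := by
      exact ic.sub (integrable_const _)
    have ib : Integrable (fun ω => ∑ t ∈ Finset.range T, uhat t ⬝ᵥ Z t ω) μ :=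
      integrable_finset_sum _ (hZdotint uhat)
    rw [h1, integral_add ia ib, integral_sub ic (integrable_const _)] at h0
    rw [show ∫ ω, (∑ t ∈ Finset.range T, uhat t ⬝ᵥ Z t ω) ∂μ
        = ∑ t ∈ Finset.range T, uhat t ⬝ᵥ (fun j => ∫ ω, Z t ω j ∂μ) from
        integral_finset_sum _ (hZdotint uhat) ▸ Finset.sum_congr rfl
          (fun t ht => integral_dot (V := fun ω j => Z t ω j)
            (fun j => (hZL2 t (Finset.mem_range.mp ht) j).integrable one_le_two) (uhat t))] at h0
    rw [huhat_dot (fun t j => ∫ ω, Z t ω j ∂μ)] at h0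
    rw [show (∑ p : Fin T × Fin m, vhat p * (∫ ω, Z p.1.val ω p.2 ∂μ))
        = ∑ p : Fin T × Fin m, vhat p * meanVec μ Zvec p from
        Finset.sum_congr rfl (fun p _ => by rw [hmeanZ p])] at h0
    rw [hvhat_dot (meanVec μ Zvec), hfXT_mean, integral_const] at h0
    simp only [probReal_univ, ENNReal.toReal_one, one_smul, smul_eq_mul] at h0
    linarith
  -- orthogonality of the optimal residual to the observations
  have hWZcov : Wmat * covMat μ Zvec Zvec = covMat μ (X T) Zvec := by
    rw [hWmat, Matrix.mul_assoc,
      Matrix.nonsing_inv_mul _ ((Matrix.isUnit_iff_isUnit_det _).mp hinv), Matrix.mul_one]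
  have hcovXZ : ∀ i (p : Fin T × Fin m), ∫ ω, X T ω i * Zvec ω p ∂μ
      = covMat μ (X T) Zvec i p + meanVec μ (X T) i * meanVec μ Zvec p := by
    intro i p
    have h := centered_integral_mul (μ := μ) (hXL2 T le_rfl i) (hZvecL2 p)
    have hc : covMat μ (X T) Zvec i p
        = ∫ ω, (X T ω i - ∫ ω', X T ω' i ∂μ) * (Zvec ω p - ∫ ω', Zvec ω' p ∂μ) ∂μ := rfl
    have hm1 : meanVec μ (X T) i = ∫ ω', X T ω' i ∂μ := rfl
    have hm2 : meanVec μ Zvec p = ∫ ω', Zvec ω' p ∂μ := rfl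
    rw [hc, h, hm1, hm2]
    ring
  have hcovZZ : ∀ (q p : Fin T × Fin m), ∫ ω, Zvec ω q * Zvec ω p ∂μ
      = covMat μ Zvec Zvec q p + meanVec μ Zvec q * meanVec μ Zvec p := by
    intro q p
    have h := centered_integral_mul (μ := μ) (hZvecL2 q) (hZvecL2 p)
    have hc : covMat μ Zvec Zvec q p
        = ∫ ω, (Zvec ω q - ∫ ω', Zvec ω' q ∂μ) * (Zvec ω p - ∫ ω', Zvec ω' p ∂μ) ∂μ := rfl
    have hm1 : meanVec μ Zvec q = ∫ ω', Zvec ω' q ∂μ := rfl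
    have hm2 : meanVec μ Zvec p = ∫ ω', Zvec ω' p ∂μ := rfl
    rw [hc, h, hm1, hm2]
    ring
  have hmean0 : f ⬝ᵥ meanVec μ (X T) - y 0 ⬝ᵥ μ0
      - (∑ q : Fin T × Fin m, vhat q * meanVec μ Zvec q) = 0 := by
    rw [hvhat_dot (meanVec μ Zvec), hmean_eq]
    ring
  have hker : ∀ p : Fin T × Fin m,
      ∑ i, f i * covMat μ (X T) Zvec i p
        = ∑ q : Fin T × Fin m, vhat q * covMat μ Zvec Zvec q p := by
    intro p
    have h1 : ∑ i, f i * covMat μ (X T) Zvec i p = (f ᵥ* covMat μ (X T) Zvec) p := by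
      simp [vecMul, dotProduct]
    have h2 : ∑ q : Fin T × Fin m, vhat q * covMat μ Zvec Zvec q p
        = (vhat ᵥ* covMat μ Zvec Zvec) p := by
      simp [vecMul, dotProduct]
    rw [h1, h2, hvhatdef, mulVec_transpose, vecMul_vecMul, hWZcov]
  have hGhatZ : ∀ p : Fin T × Fin m, ∫ ω, G uhat y ω * Zvec ω p ∂μ = 0 := by
    intro p
    have hpt : ∀ ω, G uhat y ω * Zvec ω p
        = (∑ i, f i * (X T ω i * Zvec ω p)) - (y 0 ⬝ᵥ μ0) * Zvec ω p
          - ∑ q : Fin T × Fin m, vhat q * (Zvec ω q * Zvec ω p) := by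
      intro ω
      rw [hGeq uhat y hy ω, huhat_dot (fun t => Z t ω)]
      rw [show (∑ q : Fin T × Fin m, vhat q * Z q.1.val ω q.2)
          = ∑ q : Fin T × Fin m, vhat q * Zvec ω q from
          Finset.sum_congr rfl (fun q _ => by rw [hZvec ω q])]
      have hdot : f ⬝ᵥ X T ω = ∑ i, f i * X T ω i := rfl
      rw [hdot]
      simp only [sub_mul, add_mul, neg_mul, Finset.sum_mul]
      simp only [mul_assoc]
      ring
    have iXZ : ∀ i, Integrable (fun ω => X T ω i * Zvec ω p) μ :=
      fun i => L2mul (hXL2 T le_rfl i) (hZvecL2 p)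
    have iZZ : ∀ q, Integrable (fun ω => Zvec ω q * Zvec ω p) μ :=
      fun q => L2mul (hZvecL2 q) (hZvecL2 p)
    have j1 : Integrable (fun ω => ∑ i, f i * (X T ω i * Zvec ω p)) μ :=
      integrable_finset_sum _ fun i _ => (iXZ i).const_mul _
    have j2 : Integrable (fun ω => (y 0 ⬝ᵥ μ0) * Zvec ω p) μ := (hZvecInt p).const_mul _
    have j3 : Integrable (fun ω => ∑ q : Fin T × Fin m, vhat q * (Zvec ω q * Zvec ω p)) μ :=
      integrable_finset_sum _ fun q _ => (iZZ q).const_mul _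
    have j12 : Integrable (fun ω => (∑ i, f i * (X T ω i * Zvec ω p))
        - (y 0 ⬝ᵥ μ0) * Zvec ω p) μ := by exact j1.sub j2
    simp only [hpt]
    rw [integral_sub j12 j3, integral_sub j1 j2,
      integral_finset_sum _ (fun i _ => (iXZ i).const_mul _),
      integral_finset_sum _ (fun q _ => (iZZ q).const_mul _)]
    simp only [MeasureTheory.integral_const_mul]
    simp only [hcovXZ, hcovZZ]
    have hZp : ∫ ω, Zvec ω p ∂μ = meanVec μ Zvec p := rfl
    rw [hZp]
    simp only [mul_add, Finset.sum_add_distrib]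
    have e1 : ∑ i, f i * (meanVec μ (X T) i * meanVec μ Zvec p)
        = (f ⬝ᵥ meanVec μ (X T)) * meanVec μ Zvec p := by
      simp [dotProduct, Finset.sum_mul, mul_assoc]
    have e2 : ∑ q : Fin T × Fin m, vhat q * (meanVec μ Zvec q * meanVec μ Zvec p)
        = (∑ q : Fin T × Fin m, vhat q * meanVec μ Zvec q) * meanVec μ Zvec p := by
      simp [Finset.sum_mul, mul_assoc]
    rw [e1, e2, hker p]
    have h3 : (f ⬝ᵥ meanVec μ (X T) - y 0 ⬝ᵥ μ0
        - (∑ q : Fin T × Fin m, vhat q * meanVec μ Zvec q)) * meanVec μ Zvec p = 0 := by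
      rw [hmean0, zero_mul]
    rw [sub_mul, sub_mul] at h3
    linarith
  -- relation between the cost and the second moment of the residual
  have h2J : ∀ (u' : ℕ → Fin m → ℝ) (y'' : ℕ → Fin d → ℝ),
      2 * dualCost T d m Sig0 Q R y'' u' = ∫ ω, (G u' y'' ω) ^ 2 ∂μ := by
    intro u' y''
    rw [hmom u' y'', dualCost, mul_add, mul_add, Finset.mul_sum, Finset.mul_sum]
    have hhalf : ∀ x : ℝ, 2 * (1 / 2 * x) = x := fun x => by ring
    simp only [hhalf]
  constructor
  · -- part 1: global minimality
    intro u y' hsol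
    set c' : ℝ := y 0 ⬝ᵥ μ0 - y' 0 ⬝ᵥ μ0 with hc'
    set dv : Fin T × Fin m → ℝ := fun p => u p.1.val p.2 - uhat p.1.val p.2 with hdv
    set D : Ω → ℝ := fun ω => c' + ∑ p : Fin T × Fin m, dv p * Zvec ω p with hD
    have hdecomp : ∀ ω, G u y' ω = G uhat y ω + D ω := by
      intro ω
      show G u y' ω = G uhat y ω + (c' + ∑ p : Fin T × Fin m, dv p * Zvec ω p)
      rw [hGeq u y' hsol ω, hGeq uhat y hy ω]
      rw [sum_range_dot (T := T) u (fun t => Z t ω),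
        sum_range_dot (T := T) uhat (fun t => Z t ω)]
      have hterm : ∑ p : Fin T × Fin m, dv p * Zvec ω p
          = (∑ p : Fin T × Fin m, u p.1.val p.2 * Z p.1.val ω p.2)
            - ∑ p : Fin T × Fin m, uhat p.1.val p.2 * Z p.1.val ω p.2 := by
        rw [← Finset.sum_sub_distrib]
        apply Finset.sum_congr rfl
        intro p _
        simp only [hdv, hZvec ω p]
        ring
      rw [hterm, hc']
      ring
    have hDL2 : MemLp D 2 μ := by
      show MemLp (fun ω => c' + ∑ p : Fin T × Fin m, dv p * Zvec ω p) 2 μ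
      exact MemLp.add (f := fun _ => c') (g := fun ω => ∑ p : Fin T × Fin m, dv p * Zvec ω p)
        (memLp_const c')
        (memLp_finset_sum _ fun p (_ : p ∈ Finset.univ) => (hZvecL2 p).const_mul _)
    have horth : ∫ ω, G uhat y ω * D ω ∂μ = 0 := by
      have hpt : ∀ ω, G uhat y ω * D ω
          = c' * G uhat y ω
            + ∑ p : Fin T × Fin m, dv p * (G uhat y ω * Zvec ω p) := by
        intro ω
        show G uhat y ω * (c' + ∑ p : Fin T × Fin m, dv p * Zvec ω p) = _
        rw [mul_add, Finset.mul_sum]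
        congr 1
        · ring
        · exact Finset.sum_congr rfl fun p _ => by ring
      have jc : Integrable (fun ω => c' * G uhat y ω) μ :=
        ((hGL2 uhat y).integrable one_le_two).const_mul _
      have js : Integrable
          (fun ω => ∑ p : Fin T × Fin m, dv p * (G uhat y ω * Zvec ω p)) μ :=
        integrable_finset_sum _ fun p _ => (L2mul (hGL2 uhat y) (hZvecL2 p)).const_mul _
      simp only [hpt]
      rw [integral_add jc js, MeasureTheory.integral_const_mul, hGmean uhat y, mul_zero,
        integral_finset_sum _ (fun p _ => (L2mul (hGL2 uhat y) (hZvecL2 p)).const_mul _)]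
      simp only [MeasureTheory.integral_const_mul, hGhatZ, mul_zero]
      simp
    have hsq : ∫ ω, (G u y' ω) ^ 2 ∂μ
        = ∫ ω, (G uhat y ω) ^ 2 ∂μ + ∫ ω, (D ω) ^ 2 ∂μ := by
      have hpt : ∀ ω, (G u y' ω) ^ 2
          = ((G uhat y ω) ^ 2 + 2 * (G uhat y ω * D ω)) + (D ω) ^ 2 := by
        intro ω
        rw [hdecomp ω]
        ring
      have j1 : Integrable (fun ω => (G uhat y ω) ^ 2) μ := (hGL2 uhat y).integrable_sq
      have j2 : Integrable (fun ω => 2 * (G uhat y ω * D ω)) μ :=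
        (L2mul (hGL2 uhat y) hDL2).const_mul _
      have j3 : Integrable (fun ω => (D ω) ^ 2) μ := hDL2.integrable_sq
      have j12 : Integrable (fun ω => (G uhat y ω) ^ 2 + 2 * (G uhat y ω * D ω)) μ := by
        exact j1.add j2
      simp only [hpt]
      rw [integral_add j12 j3, integral_add j1 j2, MeasureTheory.integral_const_mul, horth]
      ring
    have hpos : 0 ≤ ∫ ω, (D ω) ^ 2 ∂μ := integral_nonneg fun ω => sq_nonneg _
    have e1 := h2J uhat y
    have e2 := h2J u y'
    linarith [hsq]
  · -- part 2: the estimator equals the affine MMSE prediction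
    apply Filter.Eventually.of_forall
    intro ω
    rw [huhat_dot (fun t => Z t ω)]
    have hzz : ∑ p : Fin T × Fin m, vhat p * Z p.1.val ω p.2
        = f ⬝ᵥ Wmat.mulVec (Zvec ω) := by
      rw [← hvhat_dot (Zvec ω)]
      exact Finset.sum_congr rfl fun p _ => by rw [hZvec ω p]
    rw [hzz]
    have hsub : (fun p => Zvec ω p - meanVec μ Zvec p) = Zvec ω - meanVec μ Zvec := rfl
    rw [hsub, mulVec_sub, dotProduct_add, dotProduct_sub, hmean_eq]
    ring
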